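/- Let q > 1 and γ ∈ [0,1]. The function F(x) = (γ·∑_{r∈s} x_r^{1/q} + (1−γ)·(∑_{r∈s} x_r)^{1/q})^q, defined on the nonnegative orthant (with x ≠ 0), is concave. -/

import Mathlib

open Finset

theorem generalized_objective_concave {ι : Type*} [Fintype ι]
    (q γ : ℝ) (hq : 1 < q) (hγ0 : 0 ≤ γ) (hγ1 : γ ≤ 1) :
    ConcaveOn ℝ {x : ι → ℝ | (∀ i, 0 ≤ x i) ∧ x ≠ 0}
      (fun x => (γ * ∑ i, (x i) ^ (1/q) + (1 - γ) * (∑ i, x i) ^ (1/q)) ^ q) := by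
  have hq0 : (0:ℝ) < q := lt_trans one_pos hq
  have hp0 : (0:ℝ) < 1/q := by positivity
  have hp1 : (1:ℝ)/q ≤ 1 := by rw [div_le_one hq0]; linarith
  set u : (ι → ℝ) → ℝ :=
    fun x => γ * ∑ i, (x i) ^ (1/q) + (1 - γ) * (∑ i, x i) ^ (1/q) with hu
  -- concavity inequality for u on the orthant
  have hu_conc : ∀ x y : ι → ℝ, (∀ i, 0 ≤ x i) → (∀ i, 0 ≤ y i) →
      ∀ a b : ℝ, 0 ≤ a → 0 ≤ b → a + b = 1 →
      a * u x + b * u y ≤ u (a • x + b • y) := by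
    intro x y hx hy a b ha hb hab
    have hrpow := Real.concaveOn_rpow (le_of_lt hp0) hp1
    have h1 : ∀ i, a * (x i) ^ (1/q) + b * (y i) ^ (1/q) ≤ (a * x i + b * y i) ^ (1/q) := by
      intro i
      have := hrpow.2 (Set.mem_Ici.2 (hx i)) (Set.mem_Ici.2 (hy i)) ha hb hab
      simpa [smul_eq_mul] using this
    have h1s : a * (∑ i, (x i) ^ (1/q)) + b * (∑ i, (y i) ^ (1/q))
        ≤ ∑ i, (a * x i + b * y i) ^ (1/q) := by
      rw [Finset.mul_sum, Finset.mul_sum, ← Finset.sum_add_distrib]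
      exact Finset.sum_le_sum fun i _ => h1 i
    have hxs : (∑ i, x i) ∈ Set.Ici (0:ℝ) := Finset.sum_nonneg fun i _ => hx i
    have hys : (∑ i, y i) ∈ Set.Ici (0:ℝ) := Finset.sum_nonneg fun i _ => hy i
    have h2 : a * (∑ i, x i) ^ (1/q) + b * (∑ i, y i) ^ (1/q)
        ≤ (a * ∑ i, x i + b * ∑ i, y i) ^ (1/q) := by
      have := hrpow.2 hxs hys ha hb hab
      simpa [smul_eq_mul] using this
    have hsum : ∑ i, (a • x + b • y) i = a * ∑ i, x i + b * ∑ i, y i := by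
      simp [Finset.sum_add_distrib, Finset.mul_sum]
    have hcoord : ∀ i, (a • x + b • y) i = a * x i + b * y i := by
      intro i; simp
    simp only [hu, hsum]
    have hγ1' : (0:ℝ) ≤ 1 - γ := by linarith
    have e1 : ∑ i, ((a • x + b • y) i) ^ (1/q) = ∑ i, (a * x i + b * y i) ^ (1/q) := by
      exact Finset.sum_congr rfl fun i _ => by rw [hcoord i]
    rw [e1]
    nlinarith [mul_le_mul_of_nonneg_left h1s hγ0, mul_le_mul_of_nonneg_left h2 hγ1']
  -- homogeneity of u
  have hu_hom : ∀ (c : ℝ), 0 < c → ∀ x : ι → ℝ, (∀ i, 0 ≤ x i) →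
      u (c • x) = c ^ (1/q) * u x := by
    intro c hc x hx
    have e1 : ∀ i, ((c • x) i) ^ (1/q) = c ^ (1/q) * (x i) ^ (1/q) := by
      intro i
      simp only [Pi.smul_apply, smul_eq_mul]
      exact Real.mul_rpow hc.le (hx i)
    have e2 : (∑ i, (c • x) i) ^ (1/q) = c ^ (1/q) * (∑ i, x i) ^ (1/q) := by
      have : ∑ i, (c • x) i = c * ∑ i, x i := by simp [Finset.mul_sum]
      rw [this, Real.mul_rpow hc.le (Finset.sum_nonneg fun i _ => hx i)]
    simp only [hu]
    rw [e2]
    rw [Finset.sum_congr rfl fun i _ => e1 i, ← Finset.mul_sum]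
    ring
  -- positivity of u on D
  have hu_pos : ∀ x : ι → ℝ, (∀ i, 0 ≤ x i) → x ≠ 0 → 0 < u x := by
    intro x hx hx0
    obtain ⟨i, hi⟩ := Function.ne_iff.1 hx0
    have hxi : 0 < x i := lt_of_le_of_ne (hx i) (Ne.symm hi)
    have hS1 : 0 < ∑ j, (x j) ^ (1/q) :=
      Finset.sum_pos' (fun j _ => Real.rpow_nonneg (hx j) _)
        ⟨i, Finset.mem_univ i, Real.rpow_pos_of_pos hxi _⟩
    have hS2 : 0 < (∑ j, x j) ^ (1/q) :=
      Real.rpow_pos_of_pos (Finset.sum_pos' (fun j _ => hx j) ⟨i, Finset.mem_univ i, hxi⟩) _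
    rcases eq_or_lt_of_le hγ0 with rfl | hγpos
    · simp only [hu]; nlinarith
    · have := mul_pos hγpos hS1
      have := mul_nonneg (by linarith : (0:ℝ) ≤ 1 - γ) hS2.le
      simp only [hu]; linarith
  -- convexity of the domain
  have hDconv : Convex ℝ {x : ι → ℝ | (∀ i, 0 ≤ x i) ∧ x ≠ 0} := by
    intro x hx y hy a b ha hb hab
    refine ⟨fun i => ?_, ?_⟩
    · have : (a • x + b • y) i = a * x i + b * y i := by simp
      rw [this]
      exact add_nonneg (mul_nonneg ha (hx.1 i)) (mul_nonneg hb (hy.1 i))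
    · rcases eq_or_lt_of_le ha with rfl | hapos
      · have hb1 : b = 1 := by linarith
        simpa [hb1] using hy.2
      · obtain ⟨i, hi⟩ := Function.ne_iff.1 hx.2
        have hxi : 0 < x i := lt_of_le_of_ne (hx.1 i) (Ne.symm hi)
        intro h0
        have := congrFun h0 i
        simp only [Pi.add_apply, Pi.smul_apply, smul_eq_mul, Pi.zero_apply] at this
        nlinarith [mul_nonneg hb (hy.1 i)]
  refine ⟨hDconv, ?_⟩
  intro x hx y hy a b ha hb hab
  simp only [smul_eq_mul]
  -- trivial cases
  rcases eq_or_lt_of_le ha with rfl | hapos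
  · have hb1 : b = 1 := by linarith
    simp [hb1]
  rcases eq_or_lt_of_le hb with rfl | hbpos
  · have ha1 : a = 1 := by linarith
    simp [ha1]
  -- main case
  set A := u x with hA'
  set B := u y with hB'
  have hA : 0 < A := hu_pos x hx.1 hx.2
  have hB : 0 < B := hu_pos y hy.1 hy.2
  have hAq : 0 < A ^ q := Real.rpow_pos_of_pos hA q
  have hBq : 0 < B ^ q := Real.rpow_pos_of_pos hB q
  set S := a * A ^ q + b * B ^ q with hS'
  have hS : 0 < S := by positivity
  set t := a * A ^ q / S with ht'
  have ht0 : 0 < t := by positivity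
  have ht1' : 1 - t = b * B ^ q / S := by
    field_simp [ht', hS']
    rw [ht', sub_mul, div_mul_cancel₀ _ hS.ne']
    linarith [hS']
  have ht1 : 0 < 1 - t := by rw [ht1']; positivity
  -- key scalar identity
  have key : ∀ c C : ℝ, 0 < c → 0 < C →
      (c * C ^ q / S) * ((c / (c * C ^ q / S)) ^ (1/q) * C) = c * C ^ q / S ^ (1 - 1/q) := by
    intro c C hc hC
    have hCq : 0 < C ^ q := Real.rpow_pos_of_pos hC q
    have h1 : c / (c * C ^ q / S) = S / C ^ q := by
      field_simp
    rw [h1, Real.div_rpow hS.le hCq.le, ← Real.rpow_mul hC.le,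
      mul_one_div_cancel hq0.ne', Real.rpow_one]
    have h2 : S ^ (1/q) * S ^ (1 - 1/q) = S := by
      rw [← Real.rpow_add hS, (show 1/q + (1 - 1/q) = 1 by ring), Real.rpow_one]
    have hS1 : (0:ℝ) < S ^ (1 - 1/q) := Real.rpow_pos_of_pos hS _
    rw [div_mul_cancel₀ _ hC.ne']
    rw [div_mul_eq_mul_div, div_eq_div_iff hS.ne' hS1.ne', mul_assoc, h2]
  -- apply concavity of u at rescaled points
  set z1 : ι → ℝ := (a / t) • x with hz1
  set z2 : ι → ℝ := (b / (1 - t)) • y with hz2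
  have hat : 0 < a / t := by positivity
  have hbt : 0 < b / (1 - t) := by positivity
  have hz1n : ∀ i, 0 ≤ z1 i := fun i => by
    simp only [hz1, Pi.smul_apply, smul_eq_mul]
    exact mul_nonneg hat.le (hx.1 i)
  have hz2n : ∀ i, 0 ≤ z2 i := fun i => by
    simp only [hz2, Pi.smul_apply, smul_eq_mul]
    exact mul_nonneg hbt.le (hy.1 i)
  have hcomb : t • z1 + (1 - t) • z2 = a • x + b • y := by
    rw [hz1, hz2, smul_smul, smul_smul, mul_div_cancel₀ _ ht0.ne',
      mul_div_cancel₀ _ ht1.ne']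
  have hconc := hu_conc z1 z2 hz1n hz2n t (1 - t) ht0.le ht1.le (by ring)
  rw [hcomb] at hconc
  have huz1 : u z1 = (a / t) ^ (1/q) * A := hu_hom _ hat x hx.1
  have huz2 : u z2 = (b / (1 - t)) ^ (1/q) * B := hu_hom _ hbt y hy.1
  have hbound : S ^ (1/q) ≤ u (a • x + b • y) := by
    have e1 : t * u z1 = a * A ^ q / S ^ (1 - 1/q) := by
      rw [huz1, ht']
      exact key a A hapos hA
    have e2 : (1 - t) * u z2 = b * B ^ q / S ^ (1 - 1/q) := by
      rw [huz2, ht1']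
      exact key b B hbpos hB
    have e3 : a * A ^ q / S ^ (1 - 1/q) + b * B ^ q / S ^ (1 - 1/q) = S ^ (1/q) := by
      have hS1 : (0:ℝ) < S ^ (1 - 1/q) := Real.rpow_pos_of_pos hS _
      rw [← add_div, ← hS', div_eq_iff hS1.ne', ← Real.rpow_add hS,
        (show 1/q + (1 - 1/q) = 1 by ring), Real.rpow_one]
    calc S ^ (1/q) = a * A ^ q / S ^ (1 - 1/q) + b * B ^ q / S ^ (1 - 1/q) := e3.symm
      _ = t * u z1 + (1 - t) * u z2 := by rw [e1, e2]
      _ ≤ u (a • x + b • y) := hconc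
  have hfin : S ≤ (u (a • x + b • y)) ^ q := by
    have h1 : (S ^ (1/q)) ^ q ≤ (u (a • x + b • y)) ^ q :=
      Real.rpow_le_rpow (Real.rpow_nonneg hS.le _) hbound hq0.le
    rwa [← Real.rpow_mul hS.le, one_div_mul_cancel hq0.ne', Real.rpow_one] at h1
  calc a * (u x) ^ q + b * (u y) ^ q = S := by rw [hS', hA', hB']
    _ ≤ (u (a • x + b • y)) ^ q := hfin
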